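/- (Counting m-full numbers.) Let m ≥ 2 be an integer. There exists a constant c > 0 such that the number of m-full positive integers k ≤ N is asymptotic to c · N^{1/m} as N → ∞; that is, #{k ∈ ℤ : 1 ≤ k ≤ N, and for every prime p, p ∣ k implies p^m ∣ k} / N^{1/m} → c. -/

import Mathlib

open Filter Finset

namespace MFullAux
open scoped Classical

/-- radical -/
def rad (b : ℕ) : ℕ := ∏ p ∈ b.primeFactors, p

lemma rad_pos {b : ℕ} (hb : b ≠ 0) : 0 < rad b := by
  apply Finset.prod_pos
  intro p hp
  exact (Nat.prime_of_mem_primeFactors hp).pos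

lemma rad_one : rad 1 = 1 := by simp [rad]

lemma dvd_rad {b p : ℕ} (hb : b ≠ 0) (hp : p.Prime) (hpb : p ∣ b) : p ∣ rad b :=
  Finset.dvd_prod_of_mem _ (Nat.mem_primeFactors.2 ⟨hp, hpb, hb⟩)

/-- `Q m j b` : all prime exponents of `b` lie in `[j, m)`, `b ≠ 0`. -/
def Q (m j b : ℕ) : Prop :=
  b ≠ 0 ∧ ∀ p : ℕ, p.Prime → p ∣ b → (j ≤ b.factorization p ∧ b.factorization p < m)

/-- factorization of a product of distinct prime powers -/
lemma factorization_prod_pow {s : Finset ℕ} (hs : ∀ p ∈ s, p.Prime) (n : ℕ → ℕ) (q : ℕ) :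
    (∏ p ∈ s, p ^ n p).factorization q = if q ∈ s then n q else 0 := by
  have hne : ∀ p ∈ s, p ^ n p ≠ 0 := fun p hp => pow_ne_zero _ (hs p hp).pos.ne'
  rw [Nat.factorization_prod hne]
  rw [Finsupp.finset_sum_apply]
  have : ∀ p ∈ s, (p ^ n p).factorization q = if p = q then n q else 0 := by
    intro p hp
    rw [(hs p hp).factorization_pow, Finsupp.single_apply]
    split
    · simp_all
    · rfl
  rw [Finset.sum_congr rfl this]
  rw [Finset.sum_ite_eq']

lemma prod_pow_ne_zero {s : Finset ℕ} (hs : ∀ p ∈ s, p.Prime) (n : ℕ → ℕ) :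
    (∏ p ∈ s, p ^ n p) ≠ 0 :=
  Finset.prod_ne_zero_iff.2 fun p hp => pow_ne_zero _ (hs p hp).pos.ne'

lemma primeFactors_prod_pow {s : Finset ℕ} (hs : ∀ p ∈ s, p.Prime) (n : ℕ → ℕ) :
    (∏ p ∈ s, p ^ n p).primeFactors = s.filter (fun p => n p ≠ 0) := by
  ext q
  rw [← Nat.support_factorization, Finsupp.mem_support_iff, factorization_prod_pow hs,
    Finset.mem_filter]
  split
  · simp_all
  · simp_all

/-- the map -/
def ψ (m : ℕ) (q : ℕ × ℕ) : ℕ := (q.1 * rad q.2) ^ m * q.2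

lemma psi_mfull {m : ℕ} (hm : 1 ≤ m) {a b : ℕ} (ha : a ≠ 0) (hb : b ≠ 0) :
    ∀ p : ℕ, p.Prime → p ∣ ψ m (a, b) → p ^ m ∣ ψ m (a, b) := by
  intro p pp hdvd
  have hdvd' : p ∣ a * rad b := by
    rcases (Nat.Prime.dvd_mul pp).1 hdvd with h | h
    · exact (Nat.Prime.dvd_of_dvd_pow pp) h
    · exact Dvd.dvd.mul_left (dvd_rad hb pp h) a
  exact Dvd.dvd.mul_right (pow_dvd_pow_of_dvd hdvd' m) b

lemma psi_ne_zero {m a b : ℕ} (ha : a ≠ 0) (hb : b ≠ 0) : ψ m (a, b) ≠ 0 :=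
  mul_ne_zero (pow_ne_zero _ (mul_ne_zero ha (rad_pos hb).ne')) hb

/-- factorization of ψ mod m recovers b -/
lemma factorization_psi {m : ℕ} {a b : ℕ} (ha : a ≠ 0) (hb : b ≠ 0) (q : ℕ) :
    (ψ m (a, b)).factorization q = m * (a * rad b).factorization q + b.factorization q := by
  rw [ψ, Nat.factorization_mul (pow_ne_zero _ (mul_ne_zero ha (rad_pos hb).ne')) hb,
    Nat.factorization_pow]
  simp [mul_comm]

lemma psi_injOn {m : ℕ} (hm : 1 ≤ m) {a b a' b' : ℕ} (ha : a ≠ 0) (hb : Q m 1 b)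
    (ha' : a' ≠ 0) (hb' : Q m 1 b') (h : ψ m (a, b) = ψ m (a', b')) : a = a' ∧ b = b' := by
  obtain ⟨hb0, hbf⟩ := hb
  obtain ⟨hb0', hbf'⟩ := hb'
  have hfb : ∀ (b : ℕ), b ≠ 0 → (∀ p : ℕ, p.Prime → p ∣ b → b.factorization p < m) →
      ∀ q, b.factorization q < m := by
    intro b hb0 hbf q
    by_cases hq : q.Prime
    · by_cases hqb : q ∣ b
      · exact hbf q hq hqb
      · rw [Nat.factorization_eq_zero_of_not_dvd hqb]; omega
    · rw [Nat.factorization_eq_zero_of_not_prime _ hq]; omega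
  have hbb : b = b' := by
    refine Nat.eq_of_factorization_eq hb0 hb0' fun q => ?_
    have e1 := factorization_psi (m := m) ha hb0 q
    have e2 := factorization_psi (m := m) ha' hb0' q
    rw [h] at e1
    have l1 := hfb b hb0 (fun p pp hd => (hbf p pp hd).2) q
    have l2 := hfb b' hb0' (fun p pp hd => (hbf' p pp hd).2) q
    have r1 : b.factorization q = (ψ m (a', b')).factorization q % m := by
      rw [e1, Nat.mul_add_mod, Nat.mod_eq_of_lt l1]
    have r2 : b'.factorization q = (ψ m (a', b')).factorization q % m := by
      rw [e2, Nat.mul_add_mod, Nat.mod_eq_of_lt l2]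
    rw [r1, r2]
  subst hbb
  refine ⟨?_, rfl⟩
  have hc : (a * rad b) ^ m = (a' * rad b) ^ m :=
    Nat.eq_of_mul_eq_mul_right (Nat.pos_of_ne_zero hb0) h
  have := Nat.pow_left_injective (by omega : m ≠ 0) hc
  exact Nat.eq_of_mul_eq_mul_right (rad_pos hb0) this

/-- surjectivity: every m-full positive integer is ψ of admissible pair -/
lemma psi_surj {m : ℕ} (hm : 1 ≤ m) {k : ℕ} (hk : k ≠ 0)
    (hfull : ∀ p : ℕ, p.Prime → p ∣ k → p ^ m ∣ k) :
    ∃ a b : ℕ, a ≠ 0 ∧ Q m 1 b ∧ ψ m (a, b) = k := by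
  classical
  set s := k.primeFactors with hs
  have hsp : ∀ p ∈ s, p.Prime := fun p hp => Nat.prime_of_mem_primeFactors hp
  set e := k.factorization with he
  set B := ∏ p ∈ s, p ^ (e p % m) with hB
  set A := ∏ p ∈ s, p ^ (e p / m) with hA
  have hB0 : B ≠ 0 := prod_pow_ne_zero hsp _
  have hA0 : A ≠ 0 := prod_pow_ne_zero hsp _
  -- A^m * B = k
  have hAmB : A ^ m * B = k := by
    rw [hA, hB, ← Finset.prod_pow, ← Finset.prod_mul_distrib]
    have : ∀ p ∈ s, (p ^ (e p / m)) ^ m * p ^ (e p % m) = p ^ e p := by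
      intro p hp
      rw [← pow_mul, ← pow_add]
      congr 1
      have h1 := Nat.div_add_mod (e p) m
      have h2 : e p / m * m = m * (e p / m) := Nat.mul_comm _ _
      omega
    rw [Finset.prod_congr rfl this]
    conv_rhs => rw [← Nat.factorization_prod_pow_eq_self hk]
    rfl
  -- exponents ≥ m for primes of k
  have hem : ∀ p ∈ s, m ≤ e p := by
    intro p hp
    have pp := hsp p hp
    have hdvd : p ∣ k := Nat.dvd_of_mem_primeFactors hp
    exact (Nat.Prime.pow_dvd_iff_le_factorization pp hk).1 (hfull p pp hdvd)
  -- B's factorization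
  have hBf : ∀ q, B.factorization q = if q ∈ s then e q % m else 0 :=
    factorization_prod_pow hsp _
  have hQB : Q m 1 B := by
    refine ⟨hB0, fun p pp hpB => ?_⟩
    have h1 := (Nat.Prime.factorization_pos_of_dvd pp hB0 hpB)
    have h2 : B.factorization p < m := by
      rw [hBf p]
      split
      · exact Nat.mod_lt _ (by omega)
      · omega
    exact ⟨h1, h2⟩
  -- rad B divides A
  have hradB : rad B ∣ A := by
    have hBpf : B.primeFactors = s.filter (fun p => e p % m ≠ 0) := primeFactors_prod_pow hsp _
    rw [rad, hBpf]
    calc (∏ p ∈ s.filter (fun p => e p % m ≠ 0), p)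
        ∣ ∏ p ∈ s.filter (fun p => e p % m ≠ 0), p ^ (e p / m) := by
          apply Finset.prod_dvd_prod_of_dvd
          intro p hp
          have hp' := Finset.mem_filter.1 hp
          have : 1 ≤ e p / m := Nat.one_le_div_iff (by omega) |>.2 (hem p hp'.1)
          exact dvd_pow_self p (by omega)
      _ ∣ A := Finset.prod_dvd_prod_of_subset _ _ _ (Finset.filter_subset _ _)
  refine ⟨A / rad B, B, ?_, hQB, ?_⟩
  · intro h0
    have := Nat.div_mul_cancel hradB
    rw [h0, zero_mul] at this
    exact hA0 this.symm
  · rw [ψ]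
    simp only
    rw [Nat.div_mul_cancel hradB, hAmB]


noncomputable def cnt (m N b : ℕ) : ℕ :=
  if Q m 1 b then ⌊((N : ℝ) / ((rad b : ℝ) ^ m * b)) ^ ((1:ℝ)/m)⌋₊ else 0

lemma c_pos {b : ℕ} (hb : b ≠ 0) (m : ℕ) : (0:ℝ) < (rad b : ℝ) ^ m * b := by
  have h1 : (0:ℝ) < (rad b : ℝ) := by exact_mod_cast rad_pos hb
  have h2 : (0:ℝ) < (b : ℝ) := by exact_mod_cast Nat.pos_of_ne_zero hb
  positivity

lemma psi_le_iff {m : ℕ} (hm : 1 ≤ m) {a b : ℕ} (hb : b ≠ 0) (N : ℕ) :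
    ψ m (a, b) ≤ N ↔ (a : ℝ) ≤ ((N : ℝ) / ((rad b : ℝ) ^ m * b)) ^ ((1:ℝ)/m) := by
  have hc := c_pos hb m
  have h1 : ψ m (a, b) = a ^ m * ((rad b) ^ m * b) := by rw [ψ]; ring
  have hx0 : (0:ℝ) ≤ (N : ℝ) / ((rad b : ℝ) ^ m * b) := by positivity
  rw [h1, ← @Nat.cast_le ℝ]
  push_cast
  rw [← le_div_iff₀ hc]
  rw [← pow_le_pow_iff_left₀ (by positivity) (Real.rpow_nonneg hx0 _) (by omega : m ≠ 0)]
  rw [one_div, Real.rpow_inv_natCast_pow hx0 (by omega : m ≠ 0)]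

lemma a_dvd_psi {m : ℕ} (hm : 1 ≤ m) (a b : ℕ) : a ∣ ψ m (a, b) :=
  dvd_mul_of_dvd_left (dvd_pow (dvd_mul_right a _) (by omega)) b

lemma fiber_card {m : ℕ} (hm : 1 ≤ m) (N b : ℕ) :
    (((Finset.range (N+1) ×ˢ Finset.range (N+1)).filter
        (fun q : ℕ × ℕ => 1 ≤ q.1 ∧ Q m 1 q.2 ∧ ψ m q ≤ N)).filter
          (fun q => q.2 = b)).card = cnt m N b := by
  classical
  by_cases hQ : Q m 1 b
  · have hb0 : b ≠ 0 := hQ.1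
    set x : ℝ := ((N : ℝ) / ((rad b : ℝ) ^ m * b)) ^ ((1:ℝ)/m) with hxdef
    have hx0 : (0:ℝ) ≤ x := Real.rpow_nonneg (by positivity) _
    have hcnt : cnt m N b = ⌊x⌋₊ := if_pos hQ
    rw [hcnt]
    have hcard : (Finset.Icc 1 ⌊x⌋₊).card = ⌊x⌋₊ := by
      rw [Nat.card_Icc]; omega
    rw [← hcard]
    apply Finset.card_bij (fun q _ => q.1)
    · -- maps to
      intro q hq
      simp only [Finset.mem_filter, Finset.mem_product, Finset.mem_range] at hq
      obtain ⟨⟨⟨-, -⟩, h1, hQq, hle⟩, hsnd⟩ := hq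
      subst hsnd
      rw [Finset.mem_Icc]
      refine ⟨h1, Nat.le_floor ?_⟩
      exact (psi_le_iff hm hb0 N).1 hle
    · -- injective
      intro q1 h1 q2 h2 heq
      simp only [Finset.mem_filter] at h1 h2
      exact Prod.ext heq (h1.2.trans h2.2.symm)
    · -- surjective
      intro a ha
      rw [Finset.mem_Icc] at ha
      have hle : ψ m (a, b) ≤ N := by
        rw [psi_le_iff hm hb0 N]
        calc (a:ℝ) ≤ (⌊x⌋₊ : ℝ) := by exact_mod_cast ha.2
          _ ≤ x := Nat.floor_le hx0
      have haN : a ≤ N := le_trans (Nat.le_of_dvd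
        (Nat.pos_of_ne_zero (psi_ne_zero (by omega) hb0)) (a_dvd_psi hm a b)) hle
      have hbN : b ≤ N := le_trans (Nat.le_of_dvd
        (Nat.pos_of_ne_zero (psi_ne_zero (by omega : a ≠ 0) hb0)) (dvd_mul_left b _)) hle
      refine ⟨(a, b), ?_, rfl⟩
      simp only [Finset.mem_filter, Finset.mem_product, Finset.mem_range]
      exact ⟨⟨⟨by omega, by omega⟩, ha.1, hQ, hle⟩, trivial⟩
  · rw [cnt, if_neg hQ]
    rw [Finset.card_eq_zero, Finset.filter_eq_empty_iff]
    intro q hq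
    simp only [Finset.mem_filter, Finset.mem_product] at hq
    intro hsnd
    exact hQ (hsnd ▸ hq.2.2.1)

lemma ncard_eq_sum {m : ℕ} (hm : 1 ≤ m) (N : ℕ) :
    {k : ℕ | 1 ≤ k ∧ k ≤ N ∧ ∀ p : ℕ, p.Prime → p ∣ k → p ^ m ∣ k}.ncard
      = ∑ b ∈ Finset.range (N+1), cnt m N b := by
  classical
  set S : Finset ℕ := (Finset.range (N+1)).filter
    (fun k => 1 ≤ k ∧ ∀ p : ℕ, p.Prime → p ∣ k → p ^ m ∣ k) with hS
  have hset : {k : ℕ | 1 ≤ k ∧ k ≤ N ∧ ∀ p : ℕ, p.Prime → p ∣ k → p ^ m ∣ k} = ↑S := by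
    ext k
    simp only [hS, Set.mem_setOf_eq, Finset.coe_filter, Finset.mem_range, Nat.lt_succ_iff,
      Set.mem_setOf_eq]
    tauto
  rw [hset, Set.ncard_coe_finset]
  set T : Finset (ℕ × ℕ) := (Finset.range (N+1) ×ˢ Finset.range (N+1)).filter
    (fun q : ℕ × ℕ => 1 ≤ q.1 ∧ Q m 1 q.2 ∧ ψ m q ≤ N) with hT
  have himg : T.image (ψ m) = S := by
    ext k
    simp only [Finset.mem_image, hT, hS, Finset.mem_filter, Finset.mem_product,
      Finset.mem_range, Nat.lt_succ_iff]
    constructor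
    · rintro ⟨⟨a, b⟩, ⟨⟨-, -⟩, h1, hQ, hle⟩, rfl⟩
      exact ⟨hle, Nat.pos_of_ne_zero (psi_ne_zero (by omega) hQ.1),
        psi_mfull hm (by omega) hQ.1⟩
    · rintro ⟨hkN, hk1, hfull⟩
      obtain ⟨a, b, ha, hQb, hpsi⟩ := psi_surj hm (by omega : k ≠ 0) hfull
      have hle : ψ m (a, b) ≤ N := hpsi ▸ hkN
      have haN : a ≤ N := le_trans (Nat.le_of_dvd
        (Nat.pos_of_ne_zero (psi_ne_zero ha hQb.1)) (a_dvd_psi hm a b)) hle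
      have hbN : b ≤ N := le_trans (Nat.le_of_dvd
        (Nat.pos_of_ne_zero (psi_ne_zero ha hQb.1)) (dvd_mul_left b _)) hle
      exact ⟨(a, b), ⟨⟨haN, hbN⟩, Nat.pos_of_ne_zero ha, hQb, hle⟩, hpsi⟩
  have hinj : Set.InjOn (ψ m) T := by
    rintro ⟨a, b⟩ hab ⟨a', b'⟩ hab' heq
    simp only [hT, Finset.coe_filter, Set.mem_setOf_eq, Finset.mem_product] at hab hab'
    obtain ⟨ha, hb⟩ := psi_injOn hm (by omega : a ≠ 0) hab.2.2.1 (by omega : a' ≠ 0)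
      hab'.2.2.1 heq
    exact Prod.ext ha hb
  rw [← himg, Finset.card_image_of_injOn hinj]
  rw [Finset.card_eq_sum_card_fiberwise (f := Prod.snd) (t := Finset.range (N+1))]
  · exact Finset.sum_congr rfl fun b _ => fiber_card hm N b
  · intro q hq
    simp only [hT, Finset.mem_coe, Finset.mem_filter, Finset.mem_product] at hq
    exact hq.1.2

noncomputable def F (m j b : ℕ) : ℝ := if Q m j b then ((b:ℝ) ^ ((1:ℝ)/m) * rad b)⁻¹ else 0

lemma F_nonneg (m j b : ℕ) : 0 ≤ F m j b := by
  rw [F]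
  split
  · have h1 : (0:ℝ) ≤ (b:ℝ) ^ ((1:ℝ)/m) := Real.rpow_nonneg (Nat.cast_nonneg b) _
    have h2 : (0:ℝ) ≤ (rad b : ℝ) := Nat.cast_nonneg _
    positivity
  · exact le_refl _

lemma summable_F_top (m : ℕ) : Summable (F m m) := by
  apply summable_of_ne_finset_zero (s := ({1} : Finset ℕ))
  intro b hb
  have hb1 : b ≠ 1 := by simpa using hb
  rw [F, if_neg]
  rintro ⟨hb0, hf⟩
  obtain ⟨p, pp, pd⟩ := Nat.exists_prime_and_dvd hb1
  obtain ⟨h1, h2⟩ := hf p pp pd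
  omega

/-- decomposition of a `Q m j` number into its exponent-`j` part and the rest -/
lemma decomp {m j : ℕ} (hj : 1 ≤ j) (hjm : j < m) {b : ℕ} (hb : Q m j b) :
    (∏ p ∈ b.primeFactors.filter (fun p => b.factorization p = j), p) ^ j
        * (b / (∏ p ∈ b.primeFactors.filter (fun p => b.factorization p = j), p) ^ j) = b ∧
    Q m (j+1) (b / (∏ p ∈ b.primeFactors.filter (fun p => b.factorization p = j), p) ^ j) ∧
    F m j b = ((∏ p ∈ b.primeFactors.filter (fun p => b.factorization p = j), p : ℕ) : ℝ)
        ^ (-(1+(j:ℝ)/m))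
      * F m (j+1)
        (b / (∏ p ∈ b.primeFactors.filter (fun p => b.factorization p = j), p) ^ j) := by
  classical
  obtain ⟨hb0, hbf⟩ := hb
  set s : Finset ℕ := b.primeFactors.filter (fun p => b.factorization p = j) with hsdef
  have hs : ∀ p ∈ s, p.Prime := fun p hp =>
    Nat.prime_of_mem_primeFactors (Finset.mem_filter.1 hp).1
  set u : ℕ := ∏ p ∈ s, p with hudef
  have hu0 : u ≠ 0 := Finset.prod_ne_zero_iff.2 fun p hp => (hs p hp).pos.ne'
  have huj : u ^ j = ∏ p ∈ s, p ^ j := by rw [hudef, ← Finset.prod_pow]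
  have hujf : ∀ q, (u ^ j).factorization q = if q ∈ s then j else 0 := by
    intro q
    rw [huj]
    exact factorization_prod_pow hs (fun _ => j) q
  have huj0 : u ^ j ≠ 0 := pow_ne_zero _ hu0
  have hdvd : u ^ j ∣ b := by
    rw [← Nat.factorization_le_iff_dvd huj0 hb0]
    intro q
    rw [hujf q]
    split
    · rename_i hq
      exact le_of_eq (Finset.mem_filter.1 hq).2.symm
    · exact Nat.zero_le _
  set v : ℕ := b / u ^ j with hvdef
  have hvu : u ^ j * v = b := Nat.mul_div_cancel' hdvd
  have hv0 : v ≠ 0 := by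
    intro h
    rw [h, mul_zero] at hvu
    exact hb0 hvu.symm
  have hvdvd : v ∣ b := Nat.div_dvd_of_dvd hdvd
  have hvf : ∀ q, v.factorization q = b.factorization q - (if q ∈ s then j else 0) := by
    intro q
    rw [hvdef, Nat.factorization_div hdvd, Finsupp.tsub_apply, hujf q]
  have hvf' : ∀ q, q ∉ s → v.factorization q = b.factorization q := by
    intro q hq
    rw [hvf q, if_neg hq, Nat.sub_zero]
  have hvs : ∀ q ∈ s, v.factorization q = 0 := by
    intro q hq
    rw [hvf q, if_pos hq, (Finset.mem_filter.1 hq).2, Nat.sub_self]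
  have hQv : Q m (j+1) v := by
    refine ⟨hv0, fun p pp hpv => ?_⟩
    have hfv1 : 1 ≤ v.factorization p := pp.factorization_pos_of_dvd hv0 hpv
    have hpb : p ∣ b := hpv.trans hvdvd
    have hps : p ∉ s := by
      intro hp
      rw [hvs p hp] at hfv1
      omega
    have heq : v.factorization p = b.factorization p := hvf' p hps
    have hbp := hbf p pp hpb
    have hne : b.factorization p ≠ j := by
      intro h
      exact hps (Finset.mem_filter.2 ⟨Nat.mem_primeFactors.2 ⟨pp, hpb, hb0⟩, h⟩)
    omega
  refine ⟨hvu, hQv, ?_⟩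
  -- prime factors split
  have hpfb : b.primeFactors = s ∪ v.primeFactors := by
    ext q
    constructor
    · intro hq
      by_cases hqs : q ∈ s
      · exact Finset.mem_union_left _ hqs
      · apply Finset.mem_union_right
        rw [← Nat.support_factorization, Finsupp.mem_support_iff, hvf' q hqs]
        rw [← Nat.support_factorization, Finsupp.mem_support_iff] at hq
        exact hq
    · intro hq
      rcases Finset.mem_union.1 hq with h | h
      · exact (Finset.mem_filter.1 h).1
      · exact Nat.primeFactors_mono hvdvd hb0 h
  have hdisj : Disjoint s v.primeFactors := by
    rw [Finset.disjoint_left]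
    intro q hq hq'
    rw [← Nat.support_factorization, Finsupp.mem_support_iff] at hq'
    exact hq' (hvs q hq)
  have hrad : rad b = u * rad v := by
    rw [rad, hpfb, Finset.prod_union hdisj]
    rfl
  -- real computation
  rw [F, F, if_pos ⟨hb0, hbf⟩, if_pos hQv]
  have hU : (0:ℝ) < (u:ℝ) := by exact_mod_cast Nat.pos_of_ne_zero hu0
  have hV : (0:ℝ) ≤ (v:ℝ) := Nat.cast_nonneg _
  have hbuv : (b:ℝ) = (u:ℝ) ^ j * (v:ℝ) := by exact_mod_cast hvu.symm
  have hb13 : (b:ℝ) ^ ((1:ℝ)/m) = (u:ℝ) ^ ((j:ℝ)/m) * (v:ℝ) ^ ((1:ℝ)/m) := by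
    rw [hbuv, Real.mul_rpow (by positivity) hV, ← Real.rpow_natCast (u:ℝ) j,
      ← Real.rpow_mul hU.le]
    congr 2
    ring
  have hradR : ((rad b : ℕ) : ℝ) = (u:ℝ) * (rad v : ℝ) := by exact_mod_cast hrad
  rw [hb13, hradR, Real.rpow_neg hU.le, Real.rpow_add hU, Real.rpow_one, ← mul_inv]
  congr 1
  ring

lemma summable_F_step {m j : ℕ} (hj : 1 ≤ j) (hjm : j < m)
    (ih : Summable (F m (j+1))) : Summable (F m j) := by
  classical
  set g : ℕ → ℝ := fun u => (u:ℝ) ^ (-(1+(j:ℝ)/m)) with hg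
  have hgsum : Summable g := by
    apply Real.summable_nat_rpow.2
    have h1 : (0:ℝ) < (j:ℝ)/m := by
      apply div_pos
      · exact_mod_cast hj
      · exact_mod_cast (by omega : 0 < m)
    linarith
  have hgnn : ∀ u, 0 ≤ g u := fun u => Real.rpow_nonneg (Nat.cast_nonneg u) _
  have hG : Summable (fun q : ℕ × ℕ => g q.1 * F m (j+1) q.2) :=
    hgsum.mul_of_nonneg ih hgnn (fun b => F_nonneg m (j+1) b)
  have hGnn : ∀ q : ℕ × ℕ, 0 ≤ g q.1 * F m (j+1) q.2 := fun q =>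
    mul_nonneg (hgnn _) (F_nonneg _ _ _)
  set φ : ℕ → ℕ × ℕ := fun b =>
    (∏ p ∈ b.primeFactors.filter (fun p => b.factorization p = j), p,
     b / (∏ p ∈ b.primeFactors.filter (fun p => b.factorization p = j), p) ^ j) with hφ
  apply summable_of_sum_le (fun b => F_nonneg m j b)
  intro t
  calc ∑ b ∈ t, F m j b = ∑ b ∈ t.filter (fun b => Q m j b), F m j b := by
        refine (Finset.sum_filter_of_ne ?_).symm
        intro b hb hFb
        by_contra hQ
        exact hFb (by rw [F, if_neg hQ])
    _ = ∑ b ∈ t.filter (fun b => Q m j b), g (φ b).1 * F m (j+1) (φ b).2 := by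
        refine Finset.sum_congr rfl fun b hb => ?_
        exact (decomp hj hjm (Finset.mem_filter.1 hb).2).2.2
    _ = ∑ q ∈ (t.filter (fun b => Q m j b)).image φ, g q.1 * F m (j+1) q.2 := by
        refine (Finset.sum_image (f := fun q : ℕ × ℕ => g q.1 * F m (j+1) q.2) ?_).symm
        intro b hb b' hb' heq
        have h1 := (decomp hj hjm (Finset.mem_filter.1 hb).2).1
        have h2 := (decomp hj hjm (Finset.mem_filter.1 hb').2).1
        calc b = (φ b).1 ^ j * (φ b).2 := h1.symm
          _ = (φ b').1 ^ j * (φ b').2 := by rw [heq]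
          _ = b' := h2
    _ ≤ ∑' q : ℕ × ℕ, g q.1 * F m (j+1) q.2 :=
        hG.sum_le_tsum _ (fun q _ => hGnn q)

lemma summable_F_one {m : ℕ} (hm : 1 ≤ m) : Summable (F m 1) := by
  have key : ∀ d, d < m → Summable (F m (m - d)) := by
    intro d
    induction d with
    | zero => intro _; simpa using summable_F_top m
    | succ d ihd =>
      intro hd
      have h1 : m - d = (m - (d+1)) + 1 := by omega
      exact summable_F_step (by omega) (by omega) (h1 ▸ ihd (by omega))
  have := key (m-1) (by omega)
  rwa [Nat.sub_sub_self hm] at this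

lemma F_at_one {m : ℕ} (hm : 1 ≤ m) : F m 1 1 = 1 := by
  rw [F, if_pos]
  · rw [rad]
    simp [Nat.primeFactors_one, Real.one_rpow]
  · exact ⟨one_ne_zero, fun p pp pd => (pp.ne_one (Nat.dvd_one.1 pd)).elim⟩

lemma x_eq {m : ℕ} (hm : 1 ≤ m) {b : ℕ} (hb : b ≠ 0) (N : ℕ) :
    ((N:ℝ) / ((rad b : ℝ) ^ m * b)) ^ ((1:ℝ)/m)
      = (N:ℝ) ^ ((1:ℝ)/m) * ((b:ℝ) ^ ((1:ℝ)/m) * (rad b : ℝ))⁻¹ := by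
  have hr : (0:ℝ) < (rad b : ℝ) := by exact_mod_cast rad_pos hb
  have hbR : (0:ℝ) < (b:ℝ) := by exact_mod_cast Nat.pos_of_ne_zero hb
  rw [Real.div_rpow (Nat.cast_nonneg N) (by positivity),
    Real.mul_rpow (by positivity) hbR.le, one_div,
    Real.pow_rpow_inv_natCast hr.le (by omega : m ≠ 0), div_eq_mul_inv,
    mul_comm ((rad b : ℝ)) _]

lemma cnt_le {m : ℕ} (hm : 1 ≤ m) (N b : ℕ) :
    (cnt m N b : ℝ) ≤ (N:ℝ) ^ ((1:ℝ)/m) * F m 1 b := by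
  by_cases hQ : Q m 1 b
  · rw [cnt, if_pos hQ, F, if_pos hQ, ← x_eq hm hQ.1 N]
    exact Nat.floor_le (Real.rpow_nonneg (by positivity) _)
  · simp [cnt, F, hQ]

lemma cnt_ge {m : ℕ} (hm : 1 ≤ m) (N b : ℕ) (hQ : Q m 1 b) :
    (N:ℝ) ^ ((1:ℝ)/m) * F m 1 b - 1 ≤ (cnt m N b : ℝ) := by
  rw [F, if_pos hQ, ← x_eq hm hQ.1 N, cnt, if_pos hQ]
  exact (Nat.sub_one_lt_floor _).le

lemma cnt_zero_of_gt {m : ℕ} (hm : 1 ≤ m) {N b : ℕ} (hb : N < b) : cnt m N b = 0 := by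
  by_cases hQ : Q m 1 b
  · rw [cnt, if_pos hQ]
    rw [Nat.floor_eq_zero]
    have hr : (0:ℝ) < (rad b : ℝ) := by exact_mod_cast rad_pos hQ.1
    have hc := c_pos hQ.1 m
    apply Real.rpow_lt_one (by positivity)
    · rw [div_lt_one hc]
      have h1 : (b:ℝ) ≤ (rad b : ℝ) ^ m * b := by
        apply le_mul_of_one_le_left (Nat.cast_nonneg b)
        apply one_le_pow₀
        exact_mod_cast rad_pos hQ.1
      have h2 : (N:ℝ) < (b:ℝ) := by exact_mod_cast hb
      linarith
    · positivity
  · rw [cnt, if_neg hQ]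

end MFullAux

open MFullAux in
/-- **Counting m-full numbers.** Let `m ≥ 2`.  There is a constant `c > 0` such
that the number of `m`-full positive integers `k ≤ N` is asymptotic to `c · N^{1/m}` as
`N → ∞`; i.e. `#{k : 1 ≤ k ≤ N, ∀ p prime, p ∣ k → p^m ∣ k} / N^{1/m} → c`. -/
theorem count_mFull_asymptotic (m : ℕ) (hm : 2 ≤ m) :
    ∃ c : ℝ, 0 < c ∧
      Tendsto (fun N : ℕ =>
          ({k : ℕ | 1 ≤ k ∧ k ≤ N ∧ ∀ p : ℕ, p.Prime → p ∣ k → p ^ m ∣ k}.ncard : ℝ) /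
            (N : ℝ) ^ ((1 : ℝ) / m))
        atTop (nhds c) := by
  have hm1 : 1 ≤ m := by omega
  have hsum : Summable (F m 1) := summable_F_one hm1
  refine ⟨∑' b, F m 1 b, ?_, ?_⟩
  · have h1 := hsum.le_tsum 1 (fun b _ => F_nonneg m 1 b)
    rw [F_at_one hm1] at h1
    linarith
  · have hEq : ∀ N : ℕ,
        ({k : ℕ | 1 ≤ k ∧ k ≤ N ∧ ∀ p : ℕ, p.Prime → p ∣ k → p ^ m ∣ k}.ncard : ℝ) /
            (N : ℝ) ^ ((1 : ℝ) / m)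
          = ∑' b : ℕ, (cnt m N b : ℝ) / (N : ℝ) ^ ((1 : ℝ) / m) := by
      intro N
      rw [tsum_eq_sum (s := Finset.range (N+1))
        (fun b hb => by
          rw [cnt_zero_of_gt hm1 (show N < b by simpa [Nat.lt_succ_iff] using hb)]
          simp)]
      rw [← Finset.sum_div, ncard_eq_sum hm1 N]
      push_cast
      rfl
    have key : Tendsto (fun N : ℕ => ∑' b : ℕ, (cnt m N b : ℝ) / (N : ℝ) ^ ((1 : ℝ) / m))
        atTop (nhds (∑' b, F m 1 b)) := by
      apply tendsto_tsum_of_dominated_convergence hsum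
      · -- termwise limits
        intro b
        by_cases hQ : Q m 1 b
        · have hN : Tendsto (fun N : ℕ => ((N:ℝ) ^ ((1:ℝ)/m))⁻¹) atTop (nhds 0) := by
            have hinf : Tendsto (fun N : ℕ => (N:ℝ) ^ ((1:ℝ)/m)) atTop atTop :=
              (tendsto_rpow_atTop (by positivity)).comp tendsto_natCast_atTop_atTop
            exact hinf.inv_tendsto_atTop
          have hlim : Tendsto (fun N : ℕ => F m 1 b - ((N:ℝ) ^ ((1:ℝ)/m))⁻¹) atTop
              (nhds (F m 1 b)) := by
            simpa using tendsto_const_nhds.sub hN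
          apply tendsto_of_tendsto_of_tendsto_of_le_of_le' hlim tendsto_const_nhds
          · filter_upwards [eventually_ge_atTop 1] with N hN1
            have hpos : (0:ℝ) < (N:ℝ) ^ ((1:ℝ)/m) :=
              Real.rpow_pos_of_pos (by exact_mod_cast hN1) _
            calc F m 1 b - ((N:ℝ) ^ ((1:ℝ)/m))⁻¹
                = ((N:ℝ) ^ ((1:ℝ)/m) * F m 1 b - 1) / (N:ℝ) ^ ((1:ℝ)/m) := by
                  rw [sub_div, mul_div_cancel_left₀ _ hpos.ne']
                  ring
              _ ≤ (cnt m N b : ℝ) / (N:ℝ) ^ ((1:ℝ)/m) := by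
                  gcongr
                  exact cnt_ge hm1 N b hQ
          · filter_upwards [eventually_ge_atTop 1] with N hN1
            have hpos : (0:ℝ) < (N:ℝ) ^ ((1:ℝ)/m) :=
              Real.rpow_pos_of_pos (by exact_mod_cast hN1) _
            rw [div_le_iff₀ hpos]
            calc (cnt m N b : ℝ) ≤ (N:ℝ) ^ ((1:ℝ)/m) * F m 1 b := cnt_le hm1 N b
              _ = F m 1 b * (N:ℝ) ^ ((1:ℝ)/m) := mul_comm _ _
        · have hF : F m 1 b = 0 := by rw [F, if_neg hQ]
          have hc : ∀ N : ℕ, (cnt m N b : ℝ) / (N : ℝ) ^ ((1 : ℝ) / m) = 0 := fun N => by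
            rw [cnt, if_neg hQ]; simp
          rw [hF]
          exact Tendsto.congr (fun N => (hc N).symm) tendsto_const_nhds
      · -- bound
        filter_upwards [eventually_ge_atTop 1] with N hN1
        intro b
        have hpos : (0:ℝ) < (N:ℝ) ^ ((1:ℝ)/m) :=
          Real.rpow_pos_of_pos (by exact_mod_cast hN1) _
        have hnn : (0:ℝ) ≤ (cnt m N b : ℝ) / (N : ℝ) ^ ((1 : ℝ) / m) := by positivity
        rw [Real.norm_eq_abs, abs_of_nonneg hnn, div_le_iff₀ hpos]
        calc (cnt m N b : ℝ) ≤ (N:ℝ) ^ ((1:ℝ)/m) * F m 1 b := cnt_le hm1 N b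
          _ = F m 1 b * (N:ℝ) ^ ((1:ℝ)/m) := mul_comm _ _
    exact Tendsto.congr (fun N => (hEq N).symm) key
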